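/- (A posteriori error estimate, steady case.) Let A₁ ∈ ℝ^{N₁×N₁} and A₂ ∈ ℝ^{N₂×N₂} be invertible with constants σ₁, σ₂ > 0 satisfying σ₁‖x‖₂ ≤ ‖A₁x‖₂ for all x ∈ ℝ^{N₁} and σ₂‖y‖₂ ≤ ‖A₂y‖₂ for all y ∈ ℝ^{N₂}. Let 0 < M < N₂, let Φ ∈ ℝ^{N₂×M} have orthonormal columns, let P ∈ ℝ^{N₂×M} be a selection matrix (columns distinct standard basis vectors of ℝ^{N₂}) with PᵀΦ invertible, and let U ∈ ℝ^{M×N₁}. Suppose: (i) u₁ ∈ ℝ^{N₁} satisfies A₁ u₁ = f₁; (ii) u_D ∈ ℝ^{N₂} satisfies U u₁ = Pᵀ u_D; (iii) ũ₂ ∈ ℝ^{N₂} satisfies A₂ ũ₂ = f₂ − A₂ u_D, and u₂ := ũ₂ + u_D. Let V₁ ∈ ℝ^{N₁×n₁}, V₂ ∈ ℝ^{N₂×n₂}, let u_{n₁} ∈ ℝ^{n₁} and ũ_{n₂} ∈ ℝ^{n₂} be arbitrary reduced vectors, define the residuals r₁ := f₁ − A₁ V₁ u_{n₁} and r₂ :=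 (f₂ − A₂ u_D) − A₂ V₂ ũ_{n₂}, define the reduced slave approximation w₂ := V₂ ũ_{n₂} + Φ (PᵀΦ)⁻¹ U V₁ u_{n₁}, and set C := ‖Φ (PᵀΦ)⁻¹ U‖₂. Then ‖u₂ − w₂‖₂ ≤ (1/σ₂)‖r₂‖₂ + ‖(PᵀΦ)⁻¹‖₂ · ‖u_D − Φ Φᵀ u_D‖₂ + (C/σ₁)‖r₁‖₂. -/

import Mathlib

open Matrix
open scoped Matrix.Norms.L2Operator InnerProductSpace

/-- Multiplication of a real matrix with a Euclidean vector, valued in Euclidean space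
(so that `‖·‖` is the Euclidean 2-norm). -/
noncomputable def mulVecE {m n : ℕ} (A : Matrix (Fin m) (Fin n) ℝ)
    (x : EuclideanSpace ℝ (Fin n)) : EuclideanSpace ℝ (Fin m) :=
  Matrix.toEuclideanLin A x

/-- `P : ℝ^{N×M}` is a selection matrix: its `M` columns are distinct standard basis
vectors of `ℝ^N`. -/
def IsSelectionMatrix {N M : ℕ} (P : Matrix (Fin N) (Fin M) ℝ) : Prop :=
  ∃ g : Fin M → Fin N, Function.Injective g ∧
    ∀ i j, P i j = if i = g j then (1 : ℝ) else 0

lemma mulVecE_sub {m n : ℕ} (A : Matrix (Fin m) (Fin n) ℝ) (x y : EuclideanSpace ℝ (Fin n)) :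
    mulVecE A (x - y) = mulVecE A x - mulVecE A y := map_sub _ _ _

lemma mulVecE_mulVecE {m n k : ℕ} (A : Matrix (Fin m) (Fin n) ℝ) (B : Matrix (Fin n) (Fin k) ℝ)
    (x : EuclideanSpace ℝ (Fin k)) : mulVecE A (mulVecE B x) = mulVecE (A * B) x := by
  simp [mulVecE, Matrix.toEuclideanLin_apply, Matrix.mulVec_mulVec]

lemma mulVecE_one {n : ℕ} (x : EuclideanSpace ℝ (Fin n)) : mulVecE 1 x = x := by
  simp [mulVecE, Matrix.toEuclideanLin_apply]

lemma norm_mulVecE_le {m n : ℕ} (A : Matrix (Fin m) (Fin n) ℝ) (x : EuclideanSpace ℝ (Fin n)) :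
    ‖mulVecE A x‖ ≤ ‖A‖ * ‖x‖ := by
  simpa [mulVecE, Matrix.toEuclideanLin_apply] using A.l2_opNorm_mulVec x

lemma inner_mulVecE_transpose {m n : ℕ} (A : Matrix (Fin m) (Fin n) ℝ)
    (x : EuclideanSpace ℝ (Fin m)) (y : EuclideanSpace ℝ (Fin n)) :
    ⟪mulVecE Aᵀ x, y⟫_ℝ = ⟪x, mulVecE A y⟫_ℝ := by
  have h : Aᵀ = Aᴴ := by ext i j; simp [Matrix.conjTranspose_apply]
  rw [mulVecE, mulVecE, h, Matrix.toEuclideanLin_conjTranspose_eq_adjoint,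
    LinearMap.adjoint_inner_left]

lemma norm_mulVecE_orth {N M : ℕ} (Φ : Matrix (Fin N) (Fin M) ℝ) (hΦ : Φᵀ * Φ = 1)
    (z : EuclideanSpace ℝ (Fin M)) : ‖mulVecE Φ z‖ = ‖z‖ := by
  have h : ‖mulVecE Φ z‖ ^ 2 = ‖z‖ ^ 2 := by
    rw [← real_inner_self_eq_norm_sq, ← real_inner_self_eq_norm_sq,
      ← inner_mulVecE_transpose, mulVecE_mulVecE, hΦ, mulVecE_one]
  have h2 := congrArg Real.sqrt h
  rwa [Real.sqrt_sq (norm_nonneg _), Real.sqrt_sq (norm_nonneg _)] at h2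

lemma selection_isometry {N M : ℕ} {P : Matrix (Fin N) (Fin M) ℝ} (hP : IsSelectionMatrix P) :
    Pᵀ * P = 1 := by
  obtain ⟨g, hg, hPg⟩ := hP
  ext j k
  simp only [Matrix.mul_apply, Matrix.transpose_apply, hPg, Matrix.one_apply]
  rw [Finset.sum_eq_single (g j)]
  · simp [hg.eq_iff, eq_comm]
  · intro b _ hb; simp [hb]
  · simp

lemma norm_mulVecE_transpose_le {N M : ℕ} (P : Matrix (Fin N) (Fin M) ℝ) (hPP : Pᵀ * P = 1)
    (v : EuclideanSpace ℝ (Fin N)) : ‖mulVecE Pᵀ v‖ ≤ ‖v‖ := by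
  have h1 : ‖mulVecE Pᵀ v‖ ^ 2 = ⟪v, mulVecE P (mulVecE Pᵀ v)⟫_ℝ := by
    rw [← real_inner_self_eq_norm_sq]; exact inner_mulVecE_transpose P v _
  have h2 : ‖mulVecE Pᵀ v‖ ^ 2 ≤ ‖v‖ * ‖mulVecE Pᵀ v‖ := by
    calc ‖mulVecE Pᵀ v‖ ^ 2 = ⟪v, mulVecE P (mulVecE Pᵀ v)⟫_ℝ := h1
    _ ≤ ‖v‖ * ‖mulVecE P (mulVecE Pᵀ v)‖ := real_inner_le_norm _ _
    _ = ‖v‖ * ‖mulVecE Pᵀ v‖ := by rw [norm_mulVecE_orth P hPP]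
  rcases eq_or_lt_of_le (norm_nonneg (mulVecE Pᵀ v)) with h | h
  · rw [← h]; exact norm_nonneg v
  · have h3 : ‖mulVecE Pᵀ v‖ * ‖mulVecE Pᵀ v‖ ≤ ‖v‖ * ‖mulVecE Pᵀ v‖ := by
      calc ‖mulVecE Pᵀ v‖ * ‖mulVecE Pᵀ v‖ = ‖mulVecE Pᵀ v‖ ^ 2 := by ring
      _ ≤ ‖v‖ * ‖mulVecE Pᵀ v‖ := h2
    exact le_of_mul_le_mul_right h3 h

lemma deim_arith (a t X E c : ℝ) (ha : 0 ≤ a) (ht : 0 ≤ t) (hX : 0 ≤ X) (hE : 0 ≤ E)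
    (hc : 1 ≤ c) (h1 : a ^ 4 ≤ X ^ 2 * (a ^ 2 - t ^ 2)) (h2 : a ≤ c * t)
    (h3 : X ^ 2 = a ^ 2 + E ^ 2) : X ≤ c * E := by
  have hc0 : (0 : ℝ) < c := lt_of_lt_of_le one_pos hc
  have hmain : a ^ 2 * c ^ 2 ≤ (c ^ 2 - 1) * X ^ 2 := by
    rcases eq_or_lt_of_le ha with h0 | h0
    · rw [← h0]
      have hcs : (0 : ℝ) ≤ c ^ 2 - 1 := by nlinarith
      nlinarith [sq_nonneg X]
    · have ha2 : (0 : ℝ) < a ^ 2 := by positivity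
      have h2' : a ^ 2 ≤ c ^ 2 * t ^ 2 := by nlinarith
      nlinarith [mul_le_mul_of_nonneg_left h1 (sq_nonneg c),
        mul_le_mul_of_nonneg_left h2' (sq_nonneg X), ha2]
  have h4 : c ^ 2 * X ^ 2 = c ^ 2 * a ^ 2 + c ^ 2 * E ^ 2 := by rw [h3]; ring
  have hx2 : X ^ 2 ≤ (c * E) ^ 2 := by nlinarith
  have := Real.sqrt_le_sqrt hx2
  rwa [Real.sqrt_sq hX, Real.sqrt_sq (by positivity)] at this

lemma deim_bound {N M : ℕ} (hM : 0 < M) (Φ P : Matrix (Fin N) (Fin M) ℝ)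
    (hΦ : Φᵀ * Φ = 1) (hPP : Pᵀ * P = 1) (hinv : IsUnit (Pᵀ * Φ))
    (x : EuclideanSpace ℝ (Fin N)) (hx : mulVecE Pᵀ x = 0) :
    ‖x‖ ≤ ‖(Pᵀ * Φ)⁻¹‖ * ‖x - mulVecE (Φ * Φᵀ) x‖ := by
  set c : ℝ := ‖(Pᵀ * Φ)⁻¹‖ with hc
  have hdet : IsUnit (Pᵀ * Φ).det := (Matrix.isUnit_iff_isUnit_det _).mp hinv
  have hinvmul : (Pᵀ * Φ)⁻¹ * (Pᵀ * Φ) = 1 := Matrix.nonsing_inv_mul _ hdet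
  have hmulinv : (Pᵀ * Φ) * (Pᵀ * Φ)⁻¹ = 1 := Matrix.mul_nonsing_inv _ hdet
  -- f2 : ∀ z, ‖z‖ ≤ c * ‖mulVecE (Pᵀ * Φ) z‖
  have f2 : ∀ z : EuclideanSpace ℝ (Fin M), ‖z‖ ≤ c * ‖mulVecE (Pᵀ * Φ) z‖ := by
    intro z
    calc ‖z‖ = ‖mulVecE ((Pᵀ * Φ)⁻¹ * (Pᵀ * Φ)) z‖ := by rw [hinvmul, mulVecE_one]
    _ = ‖mulVecE (Pᵀ * Φ)⁻¹ (mulVecE (Pᵀ * Φ) z)‖ := by rw [mulVecE_mulVecE]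
    _ ≤ c * ‖mulVecE (Pᵀ * Φ) z‖ := norm_mulVecE_le _ _
  -- c ≥ 1
  have hc1 : (1 : ℝ) ≤ c := by
    set v : EuclideanSpace ℝ (Fin M) := EuclideanSpace.single ⟨0, hM⟩ 1
    have hv : ‖v‖ = 1 := by simp [v]
    have h1 : ‖v‖ ≤ c * ‖mulVecE (Pᵀ * Φ) v‖ := f2 v
    have h2 : ‖mulVecE (Pᵀ * Φ) v‖ ≤ ‖v‖ := by
      rw [← mulVecE_mulVecE]
      calc ‖mulVecE Pᵀ (mulVecE Φ v)‖ ≤ ‖mulVecE Φ v‖ := norm_mulVecE_transpose_le P hPP _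
      _ = ‖v‖ := norm_mulVecE_orth Φ hΦ v
    have hcc : 0 ≤ c := norm_nonneg _
    have h3 : c * ‖mulVecE (Pᵀ * Φ) v‖ ≤ c * ‖v‖ := mul_le_mul_of_nonneg_left h2 hcc
    rw [hv] at h1 h3
    rw [mul_one] at h3
    linarith
  set z : EuclideanSpace ℝ (Fin M) := mulVecE Φᵀ x with hz
  set e : EuclideanSpace ℝ (Fin N) := x - mulVecE (Φ * Φᵀ) x with he
  have hΦz : mulVecE (Φ * Φᵀ) x = mulVecE Φ z := by rw [hz, mulVecE_mulVecE]
  -- Φᵀ e = 0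
  have hΦe : mulVecE Φᵀ e = 0 := by
    rw [he, mulVecE_sub, mulVecE_mulVecE, ← Matrix.mul_assoc, hΦ, Matrix.one_mul, sub_self]
  have hinner : ⟪mulVecE Φ z, e⟫_ℝ = 0 := by
    rw [real_inner_comm, ← inner_mulVecE_transpose, hΦe, inner_zero_left]
  -- ‖x‖² = ‖z‖² + ‖e‖²
  have hxze : ‖x‖ ^ 2 = ‖z‖ ^ 2 + ‖e‖ ^ 2 := by
    have hxe : x = mulVecE Φ z + e := by rw [he, hΦz]; abel
    rw [hxe, norm_add_sq_real, hinner, norm_mulVecE_orth Φ hΦ]; ring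
  -- ‖z‖² = ⟪x, Φ z⟫
  have hz2 : ‖z‖ ^ 2 = ⟪x, mulVecE Φ z⟫_ℝ := by
    rw [← real_inner_self_eq_norm_sq, hz, real_inner_comm, inner_mulVecE_transpose]
  set t : ℝ := ‖mulVecE (Pᵀ * Φ) z‖ with ht
  -- ⟪x, P Pᵀ Φ z⟫ = 0
  have hxP : ⟪x, mulVecE P (mulVecE (Pᵀ * Φ) z)⟫_ℝ = 0 := by
    rw [← inner_mulVecE_transpose, hx, inner_zero_left]
  have hkey : ‖z‖ ^ 2 = ⟪x, mulVecE Φ z - mulVecE P (mulVecE (Pᵀ * Φ) z)⟫_ℝ := by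
    rw [inner_sub_right, hxP, sub_zero, hz2]
  have hnorm2 : ‖mulVecE Φ z - mulVecE P (mulVecE (Pᵀ * Φ) z)‖ ^ 2 = ‖z‖ ^ 2 - t ^ 2 := by
    rw [norm_sub_sq_real, norm_mulVecE_orth Φ hΦ, norm_mulVecE_orth P hPP]
    have : ⟪mulVecE Φ z, mulVecE P (mulVecE (Pᵀ * Φ) z)⟫_ℝ = t ^ 2 := by
      rw [← inner_mulVecE_transpose, mulVecE_mulVecE, real_inner_self_eq_norm_sq]
    rw [this]; ring
  have hd : ‖z‖ ^ 2 ≤ ‖x‖ * ‖mulVecE Φ z - mulVecE P (mulVecE (Pᵀ * Φ) z)‖ := by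
    rw [hkey]; exact real_inner_le_norm _ _
  have hf : ‖z‖ ^ 4 ≤ ‖x‖ ^ 2 * (‖z‖ ^ 2 - t ^ 2) := by
    calc ‖z‖ ^ 4 = (‖z‖ ^ 2) ^ 2 := by ring
    _ ≤ (‖x‖ * ‖mulVecE Φ z - mulVecE P (mulVecE (Pᵀ * Φ) z)‖) ^ 2 :=
        pow_le_pow_left₀ (sq_nonneg _) hd 2
    _ = ‖x‖ ^ 2 * ‖mulVecE Φ z - mulVecE P (mulVecE (Pᵀ * Φ) z)‖ ^ 2 := by ring
    _ = ‖x‖ ^ 2 * (‖z‖ ^ 2 - t ^ 2) := by rw [hnorm2]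
  exact deim_arith ‖z‖ t ‖x‖ ‖e‖ c (norm_nonneg _) (norm_nonneg _) (norm_nonneg _)
    (norm_nonneg _) hc1 hf (f2 z) hxze


/-- A posteriori error estimate for the steady one-way coupled ROM:
`‖u₂ − w₂‖₂ ≤ (1/σ₂)‖r₂‖₂ + ‖(PᵀΦ)⁻¹‖₂ ‖u_D − ΦΦᵀu_D‖₂ + (C/σ₁)‖r₁‖₂`,
where `ũ₂` is written `ut₂` and `ũ_{n₂}` is written `utn₂`. -/
theorem stmt4 {N₁ N₂ M n₁ n₂ : ℕ}
    (A₁ : Matrix (Fin N₁) (Fin N₁) ℝ) (A₂ : Matrix (Fin N₂) (Fin N₂) ℝ)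
    (hA₁ : IsUnit A₁) (hA₂ : IsUnit A₂)
    (σ₁ σ₂ : ℝ) (hσ₁ : 0 < σ₁) (hσ₂ : 0 < σ₂)
    (hb₁ : ∀ x : EuclideanSpace ℝ (Fin N₁), σ₁ * ‖x‖ ≤ ‖mulVecE A₁ x‖)
    (hb₂ : ∀ y : EuclideanSpace ℝ (Fin N₂), σ₂ * ‖y‖ ≤ ‖mulVecE A₂ y‖)
    (hM : 0 < M) (hMN : M < N₂)
    (Φ P : Matrix (Fin N₂) (Fin M) ℝ)
    (hΦ : Φᵀ * Φ = 1)
    (hP : IsSelectionMatrix P)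
    (hinv : IsUnit (Pᵀ * Φ))
    (U : Matrix (Fin M) (Fin N₁) ℝ)
    (u₁ f₁ : EuclideanSpace ℝ (Fin N₁)) (hu₁ : mulVecE A₁ u₁ = f₁)
    (uD : EuclideanSpace ℝ (Fin N₂)) (huD : mulVecE U u₁ = mulVecE Pᵀ uD)
    (ut₂ f₂ u₂ : EuclideanSpace ℝ (Fin N₂))
    (hut₂ : mulVecE A₂ ut₂ = f₂ - mulVecE A₂ uD)
    (hu₂ : u₂ = ut₂ + uD)
    (V₁ : Matrix (Fin N₁) (Fin n₁) ℝ) (V₂ : Matrix (Fin N₂) (Fin n₂) ℝ)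
    (un₁ : EuclideanSpace ℝ (Fin n₁)) (utn₂ : EuclideanSpace ℝ (Fin n₂))
    (r₁ : EuclideanSpace ℝ (Fin N₁)) (hr₁ : r₁ = f₁ - mulVecE (A₁ * V₁) un₁)
    (r₂ : EuclideanSpace ℝ (Fin N₂)) (hr₂ : r₂ = (f₂ - mulVecE A₂ uD) - mulVecE (A₂ * V₂) utn₂)
    (w₂ : EuclideanSpace ℝ (Fin N₂))
    (hw₂ : w₂ = mulVecE V₂ utn₂ + mulVecE (Φ * (Pᵀ * Φ)⁻¹ * U * V₁) un₁)
    (C : ℝ) (hC : C = ‖Φ * (Pᵀ * Φ)⁻¹ * U‖) :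
    ‖u₂ - w₂‖ ≤ (1 / σ₂) * ‖r₂‖ + ‖(Pᵀ * Φ)⁻¹‖ * ‖uD - mulVecE (Φ * Φᵀ) uD‖
      + (C / σ₁) * ‖r₁‖ := by
  have hPP : Pᵀ * P = 1 := selection_isometry hP
  have hdet : IsUnit (Pᵀ * Φ).det := (Matrix.isUnit_iff_isUnit_det _).mp hinv
  have hmulinv : (Pᵀ * Φ) * (Pᵀ * Φ)⁻¹ = 1 := Matrix.mul_nonsing_inv _ hdet
  set G : Matrix (Fin N₂) (Fin M) ℝ := Φ * (Pᵀ * Φ)⁻¹ with hG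
  set e₁ : EuclideanSpace ℝ (Fin N₁) := u₁ - mulVecE V₁ un₁ with he₁
  set e₂ : EuclideanSpace ℝ (Fin N₂) := ut₂ - mulVecE V₂ utn₂ with he₂
  set x : EuclideanSpace ℝ (Fin N₂) := uD - mulVecE (G * Pᵀ) uD with hx
  -- decomposition
  have h5 : mulVecE (G * U) e₁ = mulVecE (G * Pᵀ) uD - mulVecE (G * U * V₁) un₁ := by
    rw [he₁, mulVecE_sub, mulVecE_mulVecE, ← mulVecE_mulVecE G U, huD, mulVecE_mulVecE]
  have hdecomp : u₂ - w₂ = e₂ + x + mulVecE (G * U) e₁ := by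
    rw [hu₂, hw₂, h5, hx, he₂]; abel
  -- slave residual bound
  have hA₂e₂ : mulVecE A₂ e₂ = r₂ := by
    rw [he₂, mulVecE_sub, hut₂, mulVecE_mulVecE, hr₂]
  have hbe₂ : ‖e₂‖ ≤ ‖r₂‖ / σ₂ := by
    rw [le_div_iff₀ hσ₂]
    have := hb₂ e₂; rw [hA₂e₂] at this; linarith
  -- master residual bound
  have hA₁e₁ : mulVecE A₁ e₁ = r₁ := by
    rw [he₁, mulVecE_sub, hu₁, mulVecE_mulVecE, hr₁]
  have hbe₁ : ‖e₁‖ ≤ ‖r₁‖ / σ₁ := by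
    rw [le_div_iff₀ hσ₁]
    have := hb₁ e₁; rw [hA₁e₁] at this; linarith
  have hC0 : 0 ≤ C := hC ▸ norm_nonneg _
  have hGU : ‖mulVecE (G * U) e₁‖ ≤ (C / σ₁) * ‖r₁‖ := by
    calc ‖mulVecE (G * U) e₁‖ ≤ ‖G * U‖ * ‖e₁‖ := norm_mulVecE_le _ _
    _ = C * ‖e₁‖ := by rw [hC]
    _ ≤ C * (‖r₁‖ / σ₁) := mul_le_mul_of_nonneg_left hbe₁ hC0
    _ = (C / σ₁) * ‖r₁‖ := by ring
  -- DEIM bound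
  have hPx : mulVecE Pᵀ x = 0 := by
    have hPG : Pᵀ * (G * Pᵀ) = Pᵀ := by
      rw [hG, show Pᵀ * (Φ * (Pᵀ * Φ)⁻¹ * Pᵀ) = (Pᵀ * Φ) * (Pᵀ * Φ)⁻¹ * Pᵀ by
        simp only [Matrix.mul_assoc], hmulinv, Matrix.one_mul]
    rw [hx, mulVecE_sub, mulVecE_mulVecE, hPG, sub_self]
  have hxe : x - mulVecE (Φ * Φᵀ) x = uD - mulVecE (Φ * Φᵀ) uD := by
    have hΦG : Φ * Φᵀ * (G * Pᵀ) = G * Pᵀ := by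
      simp only [hG, Matrix.mul_assoc]
      rw [← Matrix.mul_assoc Φᵀ Φ, hΦ, Matrix.one_mul]
    rw [hx, mulVecE_sub (Φ * Φᵀ), mulVecE_mulVecE, hΦG]; abel
  have hxb : ‖x‖ ≤ ‖(Pᵀ * Φ)⁻¹‖ * ‖uD - mulVecE (Φ * Φᵀ) uD‖ := by
    have := deim_bound hM Φ P hΦ hPP hinv x hPx
    rwa [hxe] at this
  -- combine
  rw [hdecomp]
  calc ‖e₂ + x + mulVecE (G * U) e₁‖ ≤ ‖e₂‖ + ‖x‖ + ‖mulVecE (G * U) e₁‖ := norm_add₃_le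
  _ ≤ (1 / σ₂) * ‖r₂‖ + ‖(Pᵀ * Φ)⁻¹‖ * ‖uD - mulVecE (Φ * Φᵀ) uD‖ + (C / σ₁) * ‖r₁‖ := by
      have : ‖r₂‖ / σ₂ = (1 / σ₂) * ‖r₂‖ := by ring
      rw [this] at hbe₂
      exact add_le_add (add_le_add hbe₂ hxb) hGU
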